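/- Fix n ≥ 1 and a symmetric matrix C_e ∈ ℝ^{n×n}, and set L_C := (2√n + 8)·‖C_e‖₂². Let M be orthogonal, Ω := Ω(M), and let 0 < η < 1/L_C. Then the Cayley step M⁺ := M · Cay(η Ω), with Cay(X) := (I − X/2)⁻¹(I + X/2), satisfies the descent inequality f(M⁺) ≤ f(M) − η·(1 − η L_C/2)·‖Ω‖_F². -/

import Mathlib

open Matrix

/-- The diagonal matrix whose diagonal agrees with `X`. -/
noncomputable def diagPart {n : ℕ} (X : Matrix (Fin n) (Fin n) ℝ) :
    Matrix (Fin n) (Fin n) ℝ :=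
  Matrix.diagonal (fun i => X i i)

/-- Frobenius norm of a real square matrix. -/
noncomputable def frobNorm {n : ℕ} (X : Matrix (Fin n) (Fin n) ℝ) : ℝ :=
  Real.sqrt (∑ i, ∑ j, (X i j) ^ 2)

/-- Spectral (ℓ²-operator) norm of a real square matrix. -/
noncomputable def specNorm {n : ℕ} (X : Matrix (Fin n) (Fin n) ℝ) : ℝ :=
  ‖LinearMap.toContinuousLinearMap (Matrix.toEuclideanLin X)‖

/-- Rotated covariance `A(M) = Mᵀ C_e M`. -/
noncomputable def rotA {n : ℕ} (Ce M : Matrix (Fin n) (Fin n) ℝ) :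
    Matrix (Fin n) (Fin n) ℝ := Mᵀ * Ce * M

/-- The commutator generator `Ω(M) = A D − D A`. -/
noncomputable def genOmega {n : ℕ} (Ce M : Matrix (Fin n) (Fin n) ℝ) :
    Matrix (Fin n) (Fin n) ℝ :=
  rotA Ce M * diagPart (rotA Ce M) - diagPart (rotA Ce M) * rotA Ce M

/-- The diagonalization objective `f(M) = (1/2)‖off(A(M))‖_F²`. -/
noncomputable def objF {n : ℕ} (Ce M : Matrix (Fin n) (Fin n) ℝ) : ℝ :=
  (1 / 2) * frobNorm (rotA Ce M - diagPart (rotA Ce M)) ^ 2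

/-- The Cayley map `Cay(X) = (I − X/2)⁻¹ (I + X/2)`. -/
noncomputable def cayley {n : ℕ} (X : Matrix (Fin n) (Fin n) ℝ) :
    Matrix (Fin n) (Fin n) ℝ :=
  (1 - (1 / 2 : ℝ) • X)⁻¹ * (1 + (1 / 2 : ℝ) • X)

/-! ### Auxiliary lemmas -/

section Aux

variable {n : ℕ}

lemma S2_nonneg (X : Matrix (Fin n) (Fin n) ℝ) :
    0 ≤ ∑ i, ∑ j, (X i j) ^ 2 :=
  Finset.sum_nonneg fun _ _ => Finset.sum_nonneg fun _ _ => sq_nonneg _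

lemma frobNorm_nonneg (X : Matrix (Fin n) (Fin n) ℝ) : 0 ≤ frobNorm X :=
  Real.sqrt_nonneg _

lemma frobNorm_sq (X : Matrix (Fin n) (Fin n) ℝ) :
    frobNorm X ^ 2 = ∑ i, ∑ j, (X i j) ^ 2 :=
  Real.sq_sqrt (S2_nonneg X)

lemma specNorm_nonneg (X : Matrix (Fin n) (Fin n) ℝ) : 0 ≤ specNorm X :=
  norm_nonneg _

lemma frobNorm_transpose (X : Matrix (Fin n) (Fin n) ℝ) :
    frobNorm Xᵀ = frobNorm X := by
  unfold frobNorm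
  rw [Finset.sum_comm]
  simp [Matrix.transpose_apply]

lemma frobNorm_smul (t : ℝ) (X : Matrix (Fin n) (Fin n) ℝ) :
    frobNorm (t • X) = |t| * frobNorm X := by
  unfold frobNorm
  have : ∀ i j : Fin n, ((t • X) i j) ^ 2 = t ^ 2 * (X i j) ^ 2 := by
    intro i j; simp [Matrix.smul_apply]; ring
  simp_rw [this, ← Finset.mul_sum]
  rw [Real.sqrt_mul (sq_nonneg t), Real.sqrt_sq_eq_abs]

lemma cs_ip (U V : Matrix (Fin n) (Fin n) ℝ) :
    |∑ i, ∑ j, U i j * V i j| ≤ frobNorm U * frobNorm V := by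
  have key : (∑ i, ∑ j, U i j * V i j) ^ 2
      ≤ (∑ i, ∑ j, U i j ^ 2) * (∑ i, ∑ j, V i j ^ 2) := by
    have := Finset.sum_mul_sq_le_sq_mul_sq Finset.univ
      (fun p : Fin n × Fin n => U p.1 p.2) (fun p : Fin n × Fin n => V p.1 p.2)
    simpa [← Finset.sum_product', Finset.univ_product_univ] using this
  calc |∑ i, ∑ j, U i j * V i j|
      = Real.sqrt ((∑ i, ∑ j, U i j * V i j) ^ 2) := (Real.sqrt_sq_eq_abs _).symm
    _ ≤ Real.sqrt ((∑ i, ∑ j, U i j ^ 2) * (∑ i, ∑ j, V i j ^ 2)) := Real.sqrt_le_sqrt key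
    _ = frobNorm U * frobNorm V := Real.sqrt_mul (S2_nonneg U) _

lemma frobNorm_add_le (U V : Matrix (Fin n) (Fin n) ℝ) :
    frobNorm (U + V) ≤ frobNorm U + frobNorm V := by
  have expand : ∑ i, ∑ j, ((U + V) i j) ^ 2
      = (∑ i, ∑ j, U i j ^ 2) + 2 * (∑ i, ∑ j, U i j * V i j)
        + ∑ i, ∑ j, V i j ^ 2 := by
    have h : ∀ i j : Fin n, ((U + V) i j) ^ 2
        = U i j ^ 2 + 2 * (U i j * V i j) + V i j ^ 2 := by
      intro i j; simp [Matrix.add_apply]; ring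
    simp_rw [h, Finset.sum_add_distrib, ← Finset.mul_sum]
  have h1 : frobNorm (U + V) ^ 2 ≤ (frobNorm U + frobNorm V) ^ 2 := by
    rw [frobNorm_sq, expand]
    have h2 : ∑ i, ∑ j, U i j * V i j ≤ frobNorm U * frobNorm V :=
      (le_abs_self _).trans (cs_ip U V)
    have hU := frobNorm_sq U
    have hV := frobNorm_sq V
    nlinarith
  calc frobNorm (U + V) = Real.sqrt (frobNorm (U + V) ^ 2) :=
        (Real.sqrt_sq (frobNorm_nonneg _)).symm
    _ ≤ Real.sqrt ((frobNorm U + frobNorm V) ^ 2) := Real.sqrt_le_sqrt h1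
    _ = frobNorm U + frobNorm V := Real.sqrt_sq (add_nonneg (frobNorm_nonneg U) (frobNorm_nonneg V))

lemma frobNorm_sub_le (U V : Matrix (Fin n) (Fin n) ℝ) :
    frobNorm (U - V) ≤ frobNorm U + frobNorm V := by
  have : U - V = U + (-1 : ℝ) • V := by ext i j; simp [Matrix.sub_apply, sub_eq_add_neg]
  rw [this]
  refine (frobNorm_add_le U _).trans ?_
  rw [frobNorm_smul]
  simp

lemma S2_mul_le {B : Matrix (Fin n) (Fin n) ℝ} {c : ℝ}
    (hB : ∀ v : Fin n → ℝ, ∑ i, (B *ᵥ v) i ^ 2 ≤ c ^ 2 * ∑ i, v i ^ 2)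
    (Y : Matrix (Fin n) (Fin n) ℝ) :
    ∑ i, ∑ j, ((B * Y) i j) ^ 2 ≤ c ^ 2 * ∑ i, ∑ j, (Y i j) ^ 2 := by
  rw [Finset.sum_comm]
  rw [Finset.sum_comm (f := fun i j => (Y i j) ^ 2)]
  rw [Finset.mul_sum]
  apply Finset.sum_le_sum
  intro j _
  have := hB (fun k => Y k j)
  simpa [Matrix.mul_apply, Matrix.mulVec, dotProduct] using this

lemma frob_mul_left_le {B : Matrix (Fin n) (Fin n) ℝ} {c : ℝ} (hc : 0 ≤ c)
    (hB : ∀ v : Fin n → ℝ, ∑ i, (B *ᵥ v) i ^ 2 ≤ c ^ 2 * ∑ i, v i ^ 2)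
    (Y : Matrix (Fin n) (Fin n) ℝ) :
    frobNorm (B * Y) ≤ c * frobNorm Y := by
  unfold frobNorm
  calc Real.sqrt (∑ i, ∑ j, ((B * Y) i j) ^ 2)
      ≤ Real.sqrt (c ^ 2 * ∑ i, ∑ j, (Y i j) ^ 2) := Real.sqrt_le_sqrt (S2_mul_le hB Y)
    _ = c * Real.sqrt (∑ i, ∑ j, (Y i j) ^ 2) := by
        rw [Real.sqrt_mul (sq_nonneg c), Real.sqrt_sq hc]

lemma frob_diag_mul_le {d : Fin n → ℝ} {c : ℝ} (hc : 0 ≤ c)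
    (hd : ∀ i, |d i| ≤ c) (Y : Matrix (Fin n) (Fin n) ℝ) :
    frobNorm (Matrix.diagonal d * Y) ≤ c * frobNorm Y := by
  unfold frobNorm
  rw [← Real.sqrt_sq hc, ← Real.sqrt_mul (sq_nonneg c)]
  apply Real.sqrt_le_sqrt
  rw [Finset.mul_sum]
  apply Finset.sum_le_sum
  intro i _
  rw [Finset.mul_sum]
  apply Finset.sum_le_sum
  intro j _
  rw [Matrix.diagonal_mul, mul_pow]
  apply mul_le_mul_of_nonneg_right _ (sq_nonneg _)
  calc d i ^ 2 = |d i| ^ 2 := (sq_abs _).symm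
    _ ≤ c ^ 2 := pow_le_pow_left₀ (abs_nonneg _) (hd i) 2

lemma trace_eq_double (U V : Matrix (Fin n) (Fin n) ℝ) :
    Matrix.trace (U * V) = ∑ i, ∑ j, U i j * V j i := by
  simp [Matrix.trace, Matrix.diag, Matrix.mul_apply]

lemma cs_trace (U V : Matrix (Fin n) (Fin n) ℝ) :
    |Matrix.trace (U * V)| ≤ frobNorm U * frobNorm V := by
  rw [trace_eq_double]
  have : (∑ i, ∑ j, U i j * V j i) = ∑ i, ∑ j, U i j * Vᵀ i j := by
    simp [Matrix.transpose_apply]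
  rw [this, ← frobNorm_transpose V]
  exact cs_ip U Vᵀ

lemma S2_eq_trace (Z : Matrix (Fin n) (Fin n) ℝ) :
    ∑ i, ∑ j, (Z i j) ^ 2 = Matrix.trace (Zᵀ * Z) := by
  rw [trace_eq_double, Finset.sum_comm]
  simp [Matrix.transpose_apply, sq]

lemma mulVec_sq_le (B : Matrix (Fin n) (Fin n) ℝ) (v : Fin n → ℝ) :
    ∑ i, (B *ᵥ v) i ^ 2 ≤ specNorm B ^ 2 * ∑ i, v i ^ 2 := by
  have h := (LinearMap.toContinuousLinearMap (Matrix.toEuclideanLin B)).le_opNorm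
      ((WithLp.equiv 2 (Fin n → ℝ)).symm v)
  rw [LinearMap.coe_toContinuousLinearMap'] at h
  rw [Matrix.toEuclideanLin_apply] at h
  rw [EuclideanSpace.norm_eq, EuclideanSpace.norm_eq] at h
  simp only [WithLp.equiv_symm_apply, WithLp.ofLp_toLp, PiLp.toLp_apply, Real.norm_eq_abs, sq_abs] at h
  have h1 : 0 ≤ ∑ i, (B *ᵥ v) i ^ 2 := Finset.sum_nonneg fun i _ => sq_nonneg _
  have h2 : 0 ≤ ∑ i, v i ^ 2 := Finset.sum_nonneg fun i _ => sq_nonneg _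
  calc ∑ i, (B *ᵥ v) i ^ 2 = (Real.sqrt (∑ i, (B *ᵥ v) i ^ 2)) ^ 2 := (Real.sq_sqrt h1).symm
    _ ≤ (specNorm B * Real.sqrt (∑ i, v i ^ 2)) ^ 2 :=
        pow_le_pow_left₀ (Real.sqrt_nonneg _) h 2
    _ = specNorm B ^ 2 * ∑ i, v i ^ 2 := by rw [mul_pow, Real.sq_sqrt h2]

lemma orth_mulVec_iso {N : Matrix (Fin n) (Fin n) ℝ} (hN : Nᵀ * N = 1)
    (v : Fin n → ℝ) : ∑ i, (N *ᵥ v) i ^ 2 = ∑ i, v i ^ 2 := by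
  have h1 : ∑ i, (N *ᵥ v) i ^ 2 = (N *ᵥ v) ⬝ᵥ (N *ᵥ v) := by
    simp [dotProduct, sq]
  have h2 : ∑ i, v i ^ 2 = v ⬝ᵥ v := by simp [dotProduct, sq]
  rw [h1, h2, Matrix.dotProduct_mulVec, ← Matrix.vecMul_transpose,
    Matrix.vecMul_vecMul, hN, Matrix.vecMul_one]

lemma skew_unit (Y : Matrix (Fin n) (Fin n) ℝ) (hY : Yᵀ = -Y) :
    IsUnit (1 - Y).det ∧ IsUnit (1 + Y).det := by
  have hK : ((1 + Y) * (1 - Y)) = 1 + Yᴴ * Y := by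
    rw [Matrix.conjTranspose_eq_transpose_of_trivial, hY]
    noncomm_ring
  have hpd : ((1 + Y) * (1 - Y)).PosDef := by
    rw [hK]
    exact Matrix.PosDef.add_posSemidef Matrix.PosDef.one
      (Matrix.posSemidef_conjTranspose_mul_self Y)
  have hdet : IsUnit ((1 + Y) * (1 - Y)).det :=
    isUnit_iff_ne_zero.mpr (ne_of_gt hpd.det_pos)
  rw [Matrix.det_mul] at hdet
  exact ⟨isUnit_of_mul_isUnit_right hdet, isUnit_of_mul_isUnit_left hdet⟩

lemma frob_off_sq (Z : Matrix (Fin n) (Fin n) ℝ) :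
    frobNorm (Z - diagPart Z) ^ 2 = (∑ i, ∑ j, (Z i j) ^ 2) - ∑ i, (Z i i) ^ 2 := by
  rw [frobNorm_sq]
  rw [← Finset.sum_sub_distrib]
  apply Finset.sum_congr rfl
  intro i _
  have h : ∀ j : Fin n, ((Z - diagPart Z) i j) ^ 2
      = (Z i j) ^ 2 - (if j = i then (Z i i) ^ 2 else 0) := by
    intro j
    by_cases hij : j = i
    · subst hij
      simp [Matrix.sub_apply, diagPart, Matrix.diagonal_apply]
    · simp [Matrix.sub_apply, diagPart, Matrix.diagonal_apply, Ne.symm hij, hij]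
  simp_rw [h, Finset.sum_sub_distrib, Finset.sum_ite_eq' Finset.univ i]
  simp

end Aux

set_option maxHeartbeats 2000000 in
/-- **Discrete Lyapunov descent**: with `L_C = (2√n + 8)‖C_e‖₂²` and `0 < η < 1/L_C`,
the Cayley step satisfies `f(M Cay(ηΩ)) ≤ f(M) − η(1 − ηL_C/2)‖Ω‖_F²`. -/
theorem discrete_lyapunov_descent {n : ℕ} (hn : 1 ≤ n)
    (Ce M : Matrix (Fin n) (Fin n) ℝ) (hCe : Ceᵀ = Ce) (hM : Mᵀ * M = 1)
    (η : ℝ) (hη0 : 0 < η)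
    (hη : η < 1 / ((2 * Real.sqrt n + 8) * specNorm Ce ^ 2)) :
    objF Ce (M * cayley (η • genOmega Ce M))
      ≤ objF Ce M
        - η * (1 - η * ((2 * Real.sqrt n + 8) * specNorm Ce ^ 2) / 2)
          * frobNorm (genOmega Ce M) ^ 2 := by
  -- Notation
  set c : ℝ := specNorm Ce with hc_def
  set A : Matrix (Fin n) (Fin n) ℝ := rotA Ce M with hA_def
  set D : Matrix (Fin n) (Fin n) ℝ := diagPart A with hD_def
  set Ω : Matrix (Fin n) (Fin n) ℝ := genOmega Ce M with hΩ_def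
  set X : Matrix (Fin n) (Fin n) ℝ := η • Ω with hX_def
  set Y : Matrix (Fin n) (Fin n) ℝ := (1/2 : ℝ) • X with hY_def
  set ω : ℝ := frobNorm Ω with hω_def
  -- Basic numeric facts
  have hc0 : 0 ≤ c := specNorm_nonneg Ce
  have hsqn : (1 : ℝ) ≤ Real.sqrt n := by
    rw [show (1:ℝ) = Real.sqrt 1 by simp]
    exact Real.sqrt_le_sqrt (by exact_mod_cast hn)
  have hcpos : 0 < c := by
    rcases lt_or_eq_of_le hc0 with h | h
    · exact h
    · exfalso
      rw [← h] at hη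
      norm_num at hη
      linarith
  have hden : 0 < (2 * Real.sqrt n + 8) * c ^ 2 := by positivity
  have hηc2 : η * c ^ 2 ≤ 1 / 10 := by
    rw [lt_div_iff₀ hden] at hη
    nlinarith
  have hω0 : 0 ≤ ω := frobNorm_nonneg Ω
  -- Symmetry facts
  have hA : Aᵀ = A := by
    rw [hA_def]; unfold rotA
    rw [Matrix.transpose_mul, Matrix.transpose_mul, Matrix.transpose_transpose, hCe,
      Matrix.mul_assoc]
  have hD : Dᵀ = D := by rw [hD_def]; unfold diagPart; exact Matrix.diagonal_transpose _
  have hΩeq : Ω = A * D - D * A := by rw [hΩ_def, hA_def, hD_def]; rfl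
  have hΩt : Ωᵀ = -Ω := by
    rw [hΩeq, Matrix.transpose_sub, Matrix.transpose_mul, Matrix.transpose_mul, hA, hD]
    noncomm_ring
  have hXt : Xᵀ = -X := by rw [hX_def, Matrix.transpose_smul, hΩt, smul_neg]
  have hYt : Yᵀ = -Y := by rw [hY_def, Matrix.transpose_smul, hXt, smul_neg]
  obtain ⟨hdet1, hdet2⟩ := skew_unit Y hYt
  -- Cayley step
  set P : Matrix (Fin n) (Fin n) ℝ := (1 - Y)⁻¹ * X with hP_def
  set Q : Matrix (Fin n) (Fin n) ℝ := cayley X with hQ_def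
  have hQP : Q = 1 + P := by
    rw [hQ_def]; unfold cayley
    rw [← hY_def]
    have h1 : (1 + Y : Matrix (Fin n) (Fin n) ℝ) = (1 - Y) + X := by
      rw [hY_def]; module
    rw [h1, Matrix.mul_add, Matrix.nonsing_inv_mul _ hdet1, hP_def]
  have hPX : P = X + Y * P := by
    have h1 : (1 - Y) * P = X := by
      rw [hP_def, ← Matrix.mul_assoc, Matrix.mul_nonsing_inv _ hdet1, Matrix.one_mul]
    have h2 : P - Y * P = X := by rw [← h1]; noncomm_ring
    rw [← h2]; noncomm_ring
  have hQo : Qᵀ * Q = 1 := by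
    have ht1 : (1 - Y)ᵀ = 1 + Y := by
      rw [Matrix.transpose_sub, Matrix.transpose_one, hYt, sub_neg_eq_add]
    have ht2 : (1 + Y)ᵀ = 1 - Y := by
      rw [Matrix.transpose_add, Matrix.transpose_one, hYt, ← sub_eq_add_neg]
    have hQt : Qᵀ = (1 - Y) * (1 + Y)⁻¹ := by
      rw [hQ_def]; unfold cayley; rw [← hY_def]
      rw [Matrix.transpose_mul, ht2, Matrix.transpose_nonsing_inv, ht1]
    rw [hQt, hQ_def]; unfold cayley; rw [← hY_def]
    have hcomm : (1 - Y) * (1 + Y) = (1 + Y) * (1 - Y) := by noncomm_ring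
    calc (1 - Y) * (1 + Y)⁻¹ * ((1 - Y)⁻¹ * (1 + Y))
        = (1 - Y) * ((1 + Y)⁻¹ * (1 - Y)⁻¹) * (1 + Y) := by noncomm_ring
      _ = (1 - Y) * ((1 - Y) * (1 + Y))⁻¹ * (1 + Y) := by rw [Matrix.mul_inv_rev]
      _ = (1 - Y) * ((1 + Y) * (1 - Y))⁻¹ * (1 + Y) := by rw [hcomm]
      _ = (1 - Y) * ((1 - Y)⁻¹ * (1 + Y)⁻¹) * (1 + Y) := by rw [Matrix.mul_inv_rev]
      _ = ((1 - Y) * (1 - Y)⁻¹) * ((1 + Y)⁻¹ * (1 + Y)) := by noncomm_ring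
      _ = 1 := by
          rw [Matrix.mul_nonsing_inv _ hdet1, Matrix.nonsing_inv_mul _ hdet2, Matrix.one_mul]
  have hQQt : Q * Qᵀ = 1 := mul_eq_one_comm.mp hQo
  clear_value c A D Ω X Y ω P Q
  -- operator bounds
  have hAbound : ∀ v : Fin n → ℝ, ∑ i, (A *ᵥ v) i ^ 2 ≤ c ^ 2 * ∑ i, v i ^ 2 := by
    intro v
    have hMMt : M * Mᵀ = 1 := mul_eq_one_comm.mp hM
    have hAv : A *ᵥ v = Mᵀ *ᵥ (Ce *ᵥ (M *ᵥ v)) := by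
      rw [hA_def]; unfold rotA
      rw [Matrix.mulVec_mulVec, Matrix.mulVec_mulVec]
    rw [hAv, orth_mulVec_iso (by rw [Matrix.transpose_transpose]; exact hMMt)]
    calc ∑ i, (Ce *ᵥ (M *ᵥ v)) i ^ 2 ≤ c ^ 2 * ∑ i, (M *ᵥ v) i ^ 2 := by
          rw [hc_def]; exact mulVec_sq_le Ce _
      _ = c ^ 2 * ∑ i, v i ^ 2 := by rw [orth_mulVec_iso hM]
  have hDbound : ∀ i, |A i i| ≤ c := by
    intro i
    have h := hAbound (Pi.single i 1)
    rw [Matrix.mulVec_single] at h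
    have hsum : ∑ j, (Pi.single i (1:ℝ) : Fin n → ℝ) j ^ 2 = 1 := by
      simp [Pi.single_apply]
    rw [hsum, mul_one] at h
    have h2 : (A i i) ^ 2 ≤ c ^ 2 := by
      refine le_trans ?_ h
      have := Finset.single_le_sum (f := fun j => (A j i * 1) ^ 2)
        (fun j _ => sq_nonneg _) (Finset.mem_univ i)
      simpa using this
    calc |A i i| = Real.sqrt ((A i i) ^ 2) := (Real.sqrt_sq_eq_abs _).symm
      _ ≤ Real.sqrt (c ^ 2) := Real.sqrt_le_sqrt h2
      _ = c := Real.sqrt_sq hc0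
  have hfrobA : ∀ Z, frobNorm (A * Z) ≤ c * frobNorm Z :=
    fun Z => frob_mul_left_le hc0 hAbound Z
  have hfrobD : ∀ Z, frobNorm (D * Z) ≤ c * frobNorm Z := by
    intro Z
    have hDdiag : D = Matrix.diagonal (fun i => A i i) := by rw [hD_def]; rfl
    rw [hDdiag]
    exact frob_diag_mul_le hc0 hDbound Z
  have hfrobΩmul : ∀ Z, frobNorm (Ω * Z) ≤ 2 * c ^ 2 * frobNorm Z := by
    intro Z
    have hsplit : Ω * Z = A * (D * Z) - D * (A * Z) := by rw [hΩeq]; noncomm_ring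
    have b1 : frobNorm (A * (D * Z)) ≤ c * (c * frobNorm Z) :=
      (hfrobA _).trans (mul_le_mul_of_nonneg_left (hfrobD Z) hc0)
    have b2 : frobNorm (D * (A * Z)) ≤ c * (c * frobNorm Z) :=
      (hfrobD _).trans (mul_le_mul_of_nonneg_left (hfrobA Z) hc0)
    have := frobNorm_sub_le (A * (D * Z)) (D * (A * Z))
    rw [hsplit]
    nlinarith
  have hfX : frobNorm X = η * ω := by
    rw [hX_def, frobNorm_smul, abs_of_pos hη0, hω_def]
  have hfY : frobNorm Y = η / 2 * ω := by
    rw [hY_def, frobNorm_smul, hfX, abs_of_pos (by norm_num : (0:ℝ) < 1/2)]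
    ring
  have hfP0 : 0 ≤ frobNorm P := frobNorm_nonneg P
  have hYPb : frobNorm (Y * P) ≤ 1 / 10 * frobNorm P := by
    have hYP_eq : Y * P = ((1 / 2 : ℝ) * η) • (Ω * P) := by
      rw [hY_def, hX_def, smul_mul_assoc, smul_mul_assoc, smul_smul]
    rw [hYP_eq, frobNorm_smul, abs_of_pos (by positivity : (0:ℝ) < 1/2 * η)]
    have := hfrobΩmul P
    nlinarith
  have hPbound : frobNorm P ≤ 10 / 9 * (η * ω) := by
    have h1 := frobNorm_add_le X (Y * P)
    rw [← hPX] at h1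
    rw [hfX] at h1
    linarith
  -- trace identities
  have hω2 : ω ^ 2 = Matrix.trace (Ωᵀ * Ω) := by rw [hω_def, frobNorm_sq, S2_eq_trace]
  have hBt : (A * D)ᵀ = D * A := by rw [Matrix.transpose_mul, hA, hD]
  have hCt : (D * A)ᵀ = A * D := by rw [Matrix.transpose_mul, hA, hD]
  have htrBB : Matrix.trace ((A * D) * (A * D)) = Matrix.trace ((D * A) * (D * A)) := by
    conv_lhs => rw [← Matrix.trace_transpose]
    rw [Matrix.transpose_mul, hBt]
  have hω2' : ω ^ 2 = 2 * Matrix.trace ((D * A) * (A * D))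
      - 2 * Matrix.trace ((D * A) * (D * A)) := by
    rw [hω2, hΩeq, Matrix.transpose_sub, hBt, hCt]
    have expand : (D * A - A * D) * (A * D - D * A)
        = (D * A) * (A * D) - (D * A) * (D * A) - (A * D) * (A * D)
          + (A * D) * (D * A) := by noncomm_ring
    rw [expand, Matrix.trace_add, Matrix.trace_sub, Matrix.trace_sub,
      Matrix.trace_mul_comm (A * D) (D * A), htrBB]
    ring
  have htrCcΩ : Matrix.trace ((D * A) * Ω) = ω ^ 2 / 2 := by
    rw [hΩeq, Matrix.mul_sub, Matrix.trace_sub, hω2']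
    ring
  -- expansion of the rotated matrix
  have hA2 : rotA Ce (M * Q) = Qᵀ * A * Q := by
    unfold rotA
    rw [Matrix.transpose_mul, hA_def]
    unfold rotA
    noncomm_ring
  set W : Matrix (Fin n) (Fin n) ℝ := Pᵀ * A + A * P + Pᵀ * A * P with hW_def
  clear_value W
  have hAW : Qᵀ * A * Q = A + W := by
    rw [hQP, hW_def, Matrix.transpose_add, Matrix.transpose_one]
    noncomm_ring
  -- S2 invariance
  have hS2inv : ∑ i, ∑ j, ((Qᵀ * A * Q) i j) ^ 2 = ∑ i, ∑ j, (A i j) ^ 2 := by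
    rw [S2_eq_trace, S2_eq_trace]
    have ht : (Qᵀ * A * Q)ᵀ = Qᵀ * Aᵀ * Q := by
      rw [Matrix.transpose_mul, Matrix.transpose_mul, Matrix.transpose_transpose]
      noncomm_ring
    rw [ht]
    have h1 : Qᵀ * Aᵀ * Q * (Qᵀ * A * Q) = Qᵀ * (Aᵀ * (Q * Qᵀ) * (A * Q)) := by
      noncomm_ring
    rw [h1, hQQt, Matrix.mul_one, Matrix.trace_mul_comm]
    have h2 : Aᵀ * (A * Q) * Qᵀ = Aᵀ * A * (Q * Qᵀ) := by noncomm_ring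
    rw [h2, hQQt, Matrix.mul_one]
  -- trace of D * W
  have hsymtr : Matrix.trace (D * (Pᵀ * A)) = Matrix.trace (D * (A * P)) := by
    conv_lhs => rw [← Matrix.trace_transpose]
    rw [Matrix.transpose_mul, Matrix.transpose_mul, Matrix.transpose_transpose, hA, hD,
      Matrix.trace_mul_comm (A * P) D]
  have htr_main : Matrix.trace (D * (A * X)) = η * (ω ^ 2 / 2) := by
    have h1 : D * (A * X) = η • ((D * A) * Ω) := by
      rw [hX_def, mul_smul_comm, mul_smul_comm, Matrix.mul_assoc]
    rw [h1, Matrix.trace_smul, htrCcΩ, smul_eq_mul]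
  set E1 : ℝ := Matrix.trace (D * (A * (Y * P))) with hE1_def
  set E2 : ℝ := Matrix.trace (D * (Pᵀ * A * P)) with hE2_def
  clear_value E1 E2
  have htrDW : Matrix.trace (D * W) = η * ω ^ 2 + (2 * E1 + E2) := by
    rw [hW_def, Matrix.mul_add, Matrix.mul_add, Matrix.trace_add, Matrix.trace_add,
      hsymtr]
    have hsplit : D * (A * P) = D * (A * X) + D * (A * (Y * P)) := by
      conv_lhs => rw [hPX]
      rw [Matrix.mul_add, Matrix.mul_add]
    rw [hsplit, Matrix.trace_add, htr_main, ← hE1_def, ← hE2_def]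
    ring
  -- error bounds
  have hE1b : |E1| ≤ c ^ 2 * (η / 2 * ω) * frobNorm P := by
    have hgroup : D * (A * (Y * P)) = (D * (A * Y)) * P := by noncomm_ring
    rw [hE1_def, hgroup]
    refine (cs_trace _ _).trans ?_
    apply mul_le_mul_of_nonneg_right _ hfP0
    calc frobNorm (D * (A * Y)) ≤ c * frobNorm (A * Y) := hfrobD _
      _ ≤ c * (c * frobNorm Y) := mul_le_mul_of_nonneg_left (hfrobA Y) hc0
      _ = c ^ 2 * (η / 2 * ω) := by rw [hfY]; ring
  have hfPA : frobNorm (Pᵀ * A) ≤ c * frobNorm P := by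
    rw [← frobNorm_transpose (Pᵀ * A), Matrix.transpose_mul, Matrix.transpose_transpose, hA]
    exact hfrobA P
  have hE2b : |E2| ≤ c * (c * frobNorm P) * frobNorm P := by
    have hgroup : D * (Pᵀ * A * P) = (D * (Pᵀ * A)) * P := by noncomm_ring
    rw [hE2_def, hgroup]
    refine (cs_trace _ _).trans ?_
    apply mul_le_mul_of_nonneg_right _ hfP0
    calc frobNorm (D * (Pᵀ * A)) ≤ c * frobNorm (Pᵀ * A) := hfrobD _
      _ ≤ c * (c * frobNorm P) := mul_le_mul_of_nonneg_left hfPA hc0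
  have herr : |2 * E1 + E2| ≤ 190 / 81 * (η ^ 2 * c ^ 2 * ω ^ 2) := by
    have h2E1 : |E1| ≤ c ^ 2 * (η / 2 * ω) * (10 / 9 * (η * ω)) :=
      hE1b.trans (mul_le_mul_of_nonneg_left hPbound (by positivity))
    have hpq : frobNorm P * frobNorm P ≤ (10 / 9 * (η * ω)) * (10 / 9 * (η * ω)) :=
      mul_le_mul hPbound hPbound hfP0 (by positivity)
    have hE2' : |E2| ≤ c ^ 2 * (10 / 9 * (η * ω)) ^ 2 := by
      nlinarith [hE2b, hpq, sq_nonneg c, hc0, hfP0]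
    have habs : |2 * E1 + E2| ≤ 2 * |E1| + |E2| := by
      refine (abs_add_le _ _).trans ?_
      rw [abs_mul]
      norm_num
    nlinarith [abs_nonneg E1, abs_nonneg E2]
  -- diagonal sums
  have hdiagsum : ∑ i, ((A + W) i i) ^ 2
      = (∑ i, (A i i) ^ 2) + 2 * Matrix.trace (D * W) + ∑ i, (W i i) ^ 2 := by
    have htD : Matrix.trace (D * W) = ∑ i, A i i * W i i := by
      rw [hD_def]; unfold diagPart
      simp [Matrix.trace, Matrix.diag, Matrix.diagonal_mul]
    rw [htD]
    have h : ∀ i : Fin n, ((A + W) i i) ^ 2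
        = (A i i) ^ 2 + 2 * (A i i * W i i) + (W i i) ^ 2 := by
      intro i; simp [Matrix.add_apply]; ring
    simp_rw [h, Finset.sum_add_distrib, ← Finset.mul_sum]
  -- assembling
  have hobj1 : objF Ce (M * Q)
      = 1 / 2 * ((∑ i, ∑ j, (A i j) ^ 2) - ∑ i, ((A + W) i i) ^ 2) := by
    unfold objF
    rw [frob_off_sq, hA2, hS2inv, hAW]
  have hobj2 : objF Ce M
      = 1 / 2 * ((∑ i, ∑ j, (A i j) ^ 2) - ∑ i, (A i i) ^ 2) := by
    unfold objF
    rw [frob_off_sq, ← hA_def]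
  rw [hobj1, hobj2]
  have hW2 : 0 ≤ ∑ i, (W i i) ^ 2 := Finset.sum_nonneg fun _ _ => sq_nonneg _
  have habs := abs_le.mp herr
  have hconst : 190 / 81 * (η ^ 2 * c ^ 2 * ω ^ 2)
      ≤ η * (η * ((2 * Real.sqrt ↑n + 8) * c ^ 2)) / 2 * ω ^ 2 := by
    nlinarith [sq_nonneg (η * c * ω), sq_nonneg η, sq_nonneg ω, sq_nonneg c,
      mul_nonneg (sub_nonneg.mpr hsqn) (sq_nonneg (η * c * ω)), hη0.le]
  have hfinal : ∑ i, ((A + W) i i) ^ 2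
      ≥ (∑ i, (A i i) ^ 2) + 2 * η * ω ^ 2
        - η * (η * ((2 * Real.sqrt n + 8) * c ^ 2)) * ω ^ 2 := by
    linarith [hdiagsum, htrDW, hW2, hconst, habs.1]
  linarith [hfinal]
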